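/- arXiv:1812.05848 — 2 statements merged into one kernel-verified Lean document; each statement's English description precedes it below -/
import Mathlib

section
/- Let 0<s<1 and 1<p<∞. Let u ∈ H^{s,p}(ℝ^n) and let {u_j} ⊂ H^{s,p}(ℝ^n) be a sequence with ‖u_j-u‖_{L^p} + ‖D^s u_j - D^s u‖_{L^p} → 0. Assume there is a compact set K ⊂ ℝ^n containing the supports of all u_j. Then D^s u_j → D^s u in L^r(ℝ^n,ℝ^n) for every r ∈ [1,p]. -/
open MeasureTheory Filter Topology
open scoped ENNReal

noncomputable section

abbrev Euc (n : ℕ) : Type := EuclideanSpace ℝ (Fin n)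

def cns (n : ℕ) (s : ℝ) : ℝ :=
  -((n : ℝ) + s - 1) * Real.Gamma (((n : ℝ) + s - 1) / 2) /
    (Real.pi ^ ((n : ℝ) / 2) * (2 : ℝ) ^ (1 - s) * Real.Gamma ((1 - s) / 2))

/-- `HasFracGrad n m s u x A`: the principal-value limits defining the Riesz
`s`-fractional gradient of `u` at `x` exist and equal the matrix `A`
(rows indexed by `Fin m`, viewed as vectors of `ℝ^n`). -/
def HasFracGrad (n m : ℕ) (s : ℝ) (u : Euc n → Euc m) (x : Euc n)
    (A : Fin m → Euc n) : Prop :=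
  ∀ (i : Fin m) (j : Fin n),
    Tendsto (fun r : ℝ => cns n s *
        ∫ y in {y : Euc n | r ≤ ‖x - y‖},
          (u x i - u y i) * (x j - y j) / ‖x - y‖ ^ ((n : ℝ) + s + 1))
      (𝓝[>] (0 : ℝ)) (𝓝 (A i j))

/-- scalar version: fractional gradient of `u : ℝ^n → ℝ` at `x` equals `v : ℝ^n`. -/
def HasFracGradS (n : ℕ) (s : ℝ) (u : Euc n → ℝ) (x : Euc n) (v : Euc n) : Prop :=
  ∀ j : Fin n,
    Tendsto (fun r : ℝ => cns n s *
        ∫ y in {y : Euc n | r ≤ ‖x - y‖},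
          (u x - u y) * (x j - y j) / ‖x - y‖ ^ ((n : ℝ) + s + 1))
      (𝓝[>] (0 : ℝ)) (𝓝 (v j))

/-- `s`-fractional divergence of `φ` at `x` has value `d`. -/
def HasFracDiv (n : ℕ) (s : ℝ) (φ : Euc n → Fin n → ℝ) (x : Euc n) (d : ℝ) : Prop :=
  Tendsto (fun r : ℝ => -cns n s *
      ∫ y in {y : Euc n | r ≤ ‖x - y‖},
        (∑ j, (φ x j + φ y j) * (x j - y j)) / ‖x - y‖ ^ ((n : ℝ) + s + 1))
    (𝓝[>] (0 : ℝ)) (𝓝 d)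

/-- membership in the fractional space `H^{s,p}(ℝ^n, ℝ^m)`. -/
def MemHsp (n m : ℕ) (s p : ℝ) (u : Euc n → Euc m) : Prop :=
  MemLp u (ENNReal.ofReal p) (volume : Measure (Euc n)) ∧
  ∃ A : Euc n → Fin m → Euc n,
    (∀ᵐ x ∂(volume : Measure (Euc n)), HasFracGrad n m s u x (A x)) ∧
    MemLp A (ENNReal.ofReal p) (volume : Measure (Euc n))

lemma euc_norm_le {n : ℕ} (w : Euc n) (b : ℝ) (hb : 0 ≤ b) (h : ∀ i, |w i| ≤ b) :
    ‖w‖ ≤ Real.sqrt n * b := by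
  rw [EuclideanSpace.norm_eq]
  have h1 : ∑ i, ‖w i‖ ^ 2 ≤ ∑ _i : Fin n, b ^ 2 := by
    refine Finset.sum_le_sum fun i _ => ?_
    rw [Real.norm_eq_abs]
    exact pow_le_pow_left₀ (abs_nonneg _) (h i) 2
  calc Real.sqrt (∑ i, ‖w i‖ ^ 2) ≤ Real.sqrt (∑ _i : Fin n, b ^ 2) := Real.sqrt_le_sqrt h1
    _ = Real.sqrt n * b := by
        rw [Finset.sum_const, Finset.card_univ, Fintype.card_fin, nsmul_eq_mul,
          Real.sqrt_mul (by positivity), Real.sqrt_sq hb]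

lemma frac_formula {n : ℕ} {s : ℝ} {v : Euc n → ℝ} {K : Set (Euc n)} (hKm : MeasurableSet K)
    {x : Euc n} {V : Euc n} (hvx : v x = 0)
    (hv : ∀ᵐ y : Euc n, y ∉ K → v y = 0)
    {r₀ : ℝ} (hr₀ : 0 < r₀) (hxK : ∀ y ∈ K, r₀ ≤ ‖x - y‖)
    (hV : HasFracGradS n s v x V) (j : Fin n) :
    V j = cns n s * ∫ y in K, (v x - v y) * (x j - y j) / ‖x - y‖ ^ ((n:ℝ) + s + 1) := by
  set h : Euc n → ℝ := fun y => (v x - v y) * (x j - y j) / ‖x - y‖ ^ ((n:ℝ) + s + 1) with hh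
  have key : ∀ r : ℝ, 0 < r → r ≤ r₀ →
      (∫ y in {y : Euc n | r ≤ ‖x - y‖}, h y) = ∫ y in K, h y := by
    intro r hr hrr₀
    have hSm : MeasurableSet {y : Euc n | r ≤ ‖x - y‖} :=
      (isClosed_le continuous_const (continuous_const.sub continuous_id).norm).measurableSet
    have hKS : K ⊆ {y : Euc n | r ≤ ‖x - y‖} := fun y hy => le_trans hrr₀ (hxK y hy)
    have hae : h =ᵐ[volume] K.indicator h := by
      filter_upwards [hv] with y hy
      by_cases hyK : y ∈ K
      · rw [Set.indicator_of_mem hyK]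
      · rw [Set.indicator_of_notMem hyK, hh]
        simp [hy hyK, hvx]
    calc (∫ y in {y : Euc n | r ≤ ‖x - y‖}, h y)
        = ∫ y in {y : Euc n | r ≤ ‖x - y‖}, K.indicator h y :=
          integral_congr_ae (ae_restrict_of_ae hae)
      _ = ∫ y, ({y : Euc n | r ≤ ‖x - y‖}).indicator (K.indicator h) y :=
          (integral_indicator hSm).symm
      _ = ∫ y, K.indicator h y := by
          congr 1
          ext y
          rw [Set.indicator_indicator, Set.inter_eq_self_of_subset_right hKS]
      _ = ∫ y in K, h y := integral_indicator hKm
  have hev : (fun r : ℝ => cns n s * ∫ y in {y : Euc n | r ≤ ‖x - y‖}, h y)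
      =ᶠ[𝓝[>] (0:ℝ)] fun _ => cns n s * ∫ y in K, h y := by
    filter_upwards [Ioo_mem_nhdsGT_of_mem (Set.mem_Ico.mpr ⟨le_refl 0, hr₀⟩)] with r hr
    rw [key r hr.1 hr.2.le]
  have := (hV j).congr' (hev.mono fun r hr => hr)
  exact tendsto_nhds_unique this tendsto_const_nhds

lemma abs_coord_le {n : ℕ} (w : Euc n) (i : Fin n) : |w i| ≤ ‖w‖ := by
  rw [EuclideanSpace.norm_eq, ← Real.sqrt_sq_eq_abs]
  apply Real.sqrt_le_sqrt
  calc w i ^ 2 = ‖w i‖ ^ 2 := by rw [Real.norm_eq_abs, sq_abs]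
    _ ≤ ∑ j, ‖w j‖ ^ 2 :=
      Finset.single_le_sum (f := fun j => ‖w j‖ ^ 2) (fun j _ => by positivity)
        (Finset.mem_univ i)

lemma kernel_abs_le {n : ℕ} {γ : ℝ} (hγ : 1 ≤ γ) {x y : Euc n} {r₀ : ℝ} (hr₀ : 0 < r₀)
    (hd : r₀ ≤ ‖x - y‖) (i : Fin n) :
    |(x i - y i) / ‖x - y‖ ^ γ| ≤ r₀ ^ (1 - γ) := by
  have hdpos : (0:ℝ) < ‖x - y‖ := lt_of_lt_of_le hr₀ hd
  have h1 : |(x i - y i) / ‖x - y‖ ^ γ| = |x i - y i| / ‖x - y‖ ^ γ := by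
    rw [abs_div, abs_of_nonneg (Real.rpow_nonneg hdpos.le _)]
  rw [h1]
  have h2 : |x i - y i| ≤ ‖x - y‖ := by
    have := abs_coord_le (x - y) i
    simpa using this
  calc |x i - y i| / ‖x - y‖ ^ γ ≤ ‖x - y‖ / ‖x - y‖ ^ γ := by gcongr
    _ = ‖x - y‖ ^ (1 - γ) := by rw [Real.rpow_sub hdpos, Real.rpow_one]
    _ ≤ r₀ ^ (1 - γ) := Real.rpow_le_rpow_of_nonpos hr₀ hd (by linarith)

lemma integrableOn_kernel {n : ℕ} {γ : ℝ} (hγ : 1 ≤ γ) {v : Euc n → ℝ} {K : Set (Euc n)}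
    (hKm : MeasurableSet K) (hKfin : volume K < ∞) (hvi : IntegrableOn v K volume)
    {x : Euc n} {r₀ : ℝ} (hr₀ : 0 < r₀)
    (hxK : ∀ y ∈ K, r₀ ≤ ‖x - y‖) (c0 : ℝ) (i : Fin n) :
    IntegrableOn (fun y => (c0 - v y) * ((x i - y i) / ‖x - y‖ ^ γ)) K volume := by
  have hgi : IntegrableOn (fun y => c0 - v y) K volume :=
    (integrableOn_const hKfin.ne).sub hvi
  have hkm : AEStronglyMeasurable (fun y : Euc n => (x i - y i) / ‖x - y‖ ^ γ)
      (volume.restrict K) := by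
    apply Measurable.aestronglyMeasurable
    apply Measurable.div
    · exact (continuous_const.sub (EuclideanSpace.proj i).continuous).measurable
    · exact ((continuous_const.sub continuous_id).norm.measurable).pow_const γ
  have hbd : ∀ᵐ y ∂(volume.restrict K), ‖(x i - y i) / ‖x - y‖ ^ γ‖ ≤ r₀ ^ (1 - γ) := by
    filter_upwards [ae_restrict_mem hKm] with y hy
    rw [Real.norm_eq_abs]
    exact kernel_abs_le hγ hr₀ (hxK y hy) i
  exact (Integrable.bdd_mul hgi hkm hbd).congr (Eventually.of_forall fun y => mul_comm _ _)

/-- if `u_j → u` in `H^{s,p}(ℝ^n)` and all `u_j` are supported in a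
fixed compact set `K`, then `D^s u_j → D^s u` in `L^r(ℝ^n,ℝ^n)` for all `r ∈ [1,p]`. -/
theorem stmt6 (n : ℕ) (s p : ℝ) (hs0 : 0 < s) (hs1 : s < 1) (hp1 : 1 < p)
    (u : Euc n → ℝ) (Du : Euc n → Euc n)
    (hu : MemLp u (ENNReal.ofReal p) (volume : Measure (Euc n)))
    (hDu : ∀ᵐ x ∂(volume : Measure (Euc n)), HasFracGradS n s u x (Du x))
    (hDup : MemLp Du (ENNReal.ofReal p) (volume : Measure (Euc n)))
    (uj : ℕ → Euc n → ℝ) (Duj : ℕ → Euc n → Euc n)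
    (huj : ∀ j, MemLp (uj j) (ENNReal.ofReal p) (volume : Measure (Euc n)))
    (hDuj : ∀ j, ∀ᵐ x ∂(volume : Measure (Euc n)), HasFracGradS n s (uj j) x (Duj j x))
    (hDujp : ∀ j, MemLp (Duj j) (ENNReal.ofReal p) (volume : Measure (Euc n)))
    (hconv : Tendsto (fun j =>
        eLpNorm (uj j - u) (ENNReal.ofReal p) (volume : Measure (Euc n)) +
        eLpNorm (Duj j - Du) (ENNReal.ofReal p) (volume : Measure (Euc n)))
      atTop (𝓝 0))
    (K : Set (Euc n)) (hK : IsCompact K)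
    (hsupp : ∀ j, Function.support (uj j) ⊆ K) :
    ∀ r : ℝ, 1 ≤ r → r ≤ p →
      Tendsto (fun j => eLpNorm (Duj j - Du) (ENNReal.ofReal r) (volume : Measure (Euc n)))
        atTop (𝓝 0) := by
  intro r hr1 hrp
  have hp0 : (0:ℝ) < p := lt_trans one_pos hp1
  have hr0 : (0:ℝ) < r := lt_of_lt_of_le one_pos hr1
  set P : ℝ≥0∞ := ENNReal.ofReal p with hPdef
  set R' : ℝ≥0∞ := ENNReal.ofReal r with hR'def
  have hP1 : (1:ℝ≥0∞) ≤ P := by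
    rw [hPdef, ← ENNReal.ofReal_one]; exact ENNReal.ofReal_le_ofReal hp1.le
  have hPtoReal : P.toReal = p := ENNReal.toReal_ofReal hp0.le
  have hR'0 : R' ≠ 0 := by
    rw [hR'def, Ne, ENNReal.ofReal_eq_zero]; push_neg; linarith
  have hR'top : R' ≠ ∞ := ENNReal.ofReal_ne_top
  have hR'1 : (1:ℝ≥0∞) ≤ R' := by
    rw [hR'def, ← ENNReal.ofReal_one]; exact ENNReal.ofReal_le_ofReal hr1
  have hR'P : R' ≤ P := ENNReal.ofReal_le_ofReal hrp
  have hR'toReal : R'.toReal = r := ENNReal.toReal_ofReal hr0.le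
  set ε := fun j => eLpNorm (uj j - u) P volume with hεdef
  set δ := fun j => eLpNorm (Duj j - Du) P volume with hδdef
  have hε : Tendsto ε atTop (𝓝 0) :=
    tendsto_of_tendsto_of_tendsto_of_le_of_le tendsto_const_nhds hconv
      (fun j => zero_le) (fun j => le_self_add)
  have hδ : Tendsto δ atTop (𝓝 0) :=
    tendsto_of_tendsto_of_tendsto_of_le_of_le tendsto_const_nhds hconv
      (fun j => zero_le) (fun j => le_add_self)
  have hKm := hK.measurableSet
  have hKfin : volume K < ∞ := hK.measure_lt_top
  haveI : IsFiniteMeasure (volume.restrict K) :=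
    ⟨by rwa [Measure.restrict_apply_univ]⟩
  obtain ⟨R1, hR1⟩ := hK.isBounded.subset_closedBall 0
  set R := max R1 0 with hRdef
  have hR0 : (0:ℝ) ≤ R := le_max_right _ _
  have hRK : ∀ y ∈ K, ‖y‖ ≤ R := by
    intro y hy
    have := hR1 hy
    rw [Metric.mem_closedBall, dist_zero_right] at this
    exact le_trans this (le_max_left _ _)
  set R₀ : ℝ := max 1 (2 * R) with hR₀def
  have hR₀1 : (1:ℝ) ≤ R₀ := le_max_left _ _
  have hRR₀ : R < R₀ := by
    rcases le_or_gt 1 R with h | h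
    · calc R < 2 * R := by linarith
        _ ≤ R₀ := le_max_right _ _
    · exact lt_of_lt_of_le h (le_max_left _ _)
  set T : Set (Euc n) := {x | R₀ ≤ ‖x‖} with hTdef
  have hTm : MeasurableSet T := (isClosed_le continuous_const continuous_norm).measurableSet
  -- u vanishes a.e. off K
  have huj0 : ∀ j, ∀ᵐ y : Euc n, y ∉ K → uj j y = 0 := by
    intro j
    refine Eventually.of_forall fun y hy => ?_
    by_contra h
    exact hy (hsupp j (Function.mem_support.mpr h))
  have hu0 : ∀ᵐ y : Euc n, y ∉ K → u y = 0 := by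
    have hm : AEStronglyMeasurable (Kᶜ.indicator u) volume :=
      hu.aestronglyMeasurable.indicator hKm.compl
    have hle : ∀ j, eLpNorm (Kᶜ.indicator u) P volume ≤ ε j := by
      intro j
      apply eLpNorm_mono
      intro y
      by_cases hy : y ∈ K
      · rw [Set.indicator_of_notMem (by simpa using hy)]
        simp
      · rw [Set.indicator_of_mem (by simpa using hy)]
        have h0 : uj j y = 0 := by
          by_contra h; exact hy (hsupp j (Function.mem_support.mpr h))
        have : (uj j - u) y = uj j y - u y := rfl
        rw [this, h0, zero_sub, norm_neg]
    have h0 : eLpNorm (Kᶜ.indicator u) P volume ≤ 0 := ge_of_tendsto' hε hle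
    have h0' : eLpNorm (Kᶜ.indicator u) P volume = 0 := le_antisymm h0 (zero_le)
    have hP0 : P ≠ 0 := by
      rw [hPdef, Ne, ENNReal.ofReal_eq_zero]; push_neg; linarith
    have haez := (eLpNorm_eq_zero_iff hm hP0).mp h0'
    filter_upwards [haez] with y hy hyK
    have : Kᶜ.indicator u y = u y := Set.indicator_of_mem (by simpa using hyK) u
    rw [this] at hy
    simpa using hy
  -- integrability on K
  have hUint : IntegrableOn u K volume := (hu.restrict K).integrable hP1
  have hUjint : ∀ j, IntegrableOn (uj j) K volume :=
    fun j => ((huj j).restrict K).integrable hP1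
  have hIint : ∀ j, IntegrableOn (uj j - u) K volume :=
    fun j => (((huj j).sub hu).restrict K).integrable hP1
  set Ij := fun j => ∫ y in K, ‖(uj j - u) y‖ ∂volume with hIjdef
  have hIj0 : ∀ j, 0 ≤ Ij j := fun j => integral_nonneg fun y => norm_nonneg _
  -- constants
  set β : ℝ := (n:ℝ) + s with hβdef
  have hβpos : 0 < β := by positivity
  have hγ1 : (1:ℝ) ≤ (n:ℝ) + s + 1 := by
    have : (0:ℝ) ≤ (n:ℝ) := Nat.cast_nonneg n
    linarith
  set C : ℝ := Real.sqrt n * |cns n s| * (4:ℝ) ^ β with hCdef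
  have hC0 : 0 ≤ C := by positivity
  set G : Euc n → ℝ := fun x => (1 + ‖x‖) ^ (-β) with hGdef
  have hG0 : ∀ x : Euc n, 0 ≤ G x := fun x => Real.rpow_nonneg (by positivity) _
  -- pointwise tail bound
  have htail : ∀ j, ∀ᵐ x ∂(volume.restrict T), ‖(Duj j - Du) x‖ ≤ (C * Ij j) * G x := by
    intro j
    filter_upwards [ae_restrict_of_ae hDu, ae_restrict_of_ae (hDuj j),
      ae_restrict_of_ae hu0, ae_restrict_mem hTm] with x hx1 hx2 hx3 hxT
    have hxR₀ : R₀ ≤ ‖x‖ := hxT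
    have hx1' : 1 ≤ ‖x‖ := le_trans hR₀1 hxR₀
    have hx2R : 2 * R ≤ ‖x‖ := le_trans (le_max_right _ _) hxR₀
    have hxK : x ∉ K := by
      intro hxK
      have := hRK x hxK
      linarith
    have hux : u x = 0 := hx3 hxK
    have hujx : uj j x = 0 := by
      by_contra h; exact hxK (hsupp j (Function.mem_support.mpr h))
    set r₀x : ℝ := (1 + ‖x‖) / 4 with hr₀xdef
    have hr₀pos : 0 < r₀x := by positivity
    have hxKd : ∀ y ∈ K, r₀x ≤ ‖x - y‖ := by
      intro y hy
      have h1 := hRK y hy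
      have h2 : ‖x‖ - ‖y‖ ≤ ‖x - y‖ := norm_sub_norm_le x y
      rw [hr₀xdef]; linarith
    have hDuF := fun i => frac_formula hKm hux hu0 hr₀pos hxKd hx1 i
    have hDujF := fun i => frac_formula hKm hujx (huj0 j) hr₀pos hxKd hx2 i
    have hcomp : ∀ i : Fin n, |Duj j x i - Du x i| ≤ |cns n s| * (Ij j * r₀x ^ (-β)) := by
      intro i
      set k : Euc n → ℝ := fun y => (x i - y i) / ‖x - y‖ ^ ((n:ℝ) + s + 1) with hkdef
      have hI1 : IntegrableOn (fun y => (uj j x - uj j y) * k y) K volume :=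
        integrableOn_kernel hγ1 hKm hKfin (hUjint j) hr₀pos hxKd (uj j x) i
      have hI2 : IntegrableOn (fun y => (u x - u y) * k y) K volume :=
        integrableOn_kernel hγ1 hKm hKfin hUint hr₀pos hxKd (u x) i
      have hconv1 : (∫ y in K, (uj j x - uj j y) * (x i - y i) / ‖x - y‖ ^ ((n:ℝ) + s + 1))
          = ∫ y in K, (uj j x - uj j y) * k y :=
        integral_congr_ae (Eventually.of_forall fun y => by simp only [hkdef]; ring)
      have hconv2 : (∫ y in K, (u x - u y) * (x i - y i) / ‖x - y‖ ^ ((n:ℝ) + s + 1))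
          = ∫ y in K, (u x - u y) * k y :=
        integral_congr_ae (Eventually.of_forall fun y => by simp only [hkdef]; ring)
      have hsub : Duj j x i - Du x i
          = cns n s * ∫ y in K, ((uj j x - uj j y) * k y - (u x - u y) * k y) := by
        rw [hDujF i, hDuF i, hconv1, hconv2, ← mul_sub, ← integral_sub hI1 hI2]
      rw [hsub, abs_mul]
      have hbound : |∫ y in K, ((uj j x - uj j y) * k y - (u x - u y) * k y)|
          ≤ Ij j * r₀x ^ (-β) := by
        have hn := norm_integral_le_integral_norm
          (μ := volume.restrict K)
          (f := fun y => (uj j x - uj j y) * k y - (u x - u y) * k y)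
        rw [Real.norm_eq_abs] at hn
        refine le_trans hn ?_
        have hmono : (∫ y in K, ‖(uj j x - uj j y) * k y - (u x - u y) * k y‖)
            ≤ ∫ y in K, ‖(uj j - u) y‖ * r₀x ^ (-β) := by
          apply integral_mono_of_nonneg
          · exact Eventually.of_forall fun y => norm_nonneg _
          · exact ((hIint j).norm.mul_const _)
          · filter_upwards [ae_restrict_mem hKm] with y hy
            have he : (uj j x - uj j y) * k y - (u x - u y) * k y
                = -((uj j - u) y) * k y := by
              have : (uj j - u) y = uj j y - u y := rfl
              rw [this, hujx, hux]; ring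
            rw [he, norm_mul, norm_neg]
            have hk : ‖k y‖ ≤ r₀x ^ (-β) := by
              rw [Real.norm_eq_abs, hkdef]
              have := kernel_abs_le hγ1 hr₀pos (hxKd y hy) i
              rwa [show (1:ℝ) - ((n:ℝ) + s + 1) = -β by rw [hβdef]; ring] at this
            exact mul_le_mul_of_nonneg_left hk (norm_nonneg _)
        refine le_trans hmono ?_
        rw [integral_mul_const]
      exact mul_le_mul_of_nonneg_left hbound (abs_nonneg _)
    have hnorm : ‖(Duj j - Du) x‖ ≤ Real.sqrt n * (|cns n s| * (Ij j * r₀x ^ (-β))) := by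
      apply euc_norm_le
      · have := hIj0 j
        positivity
      · intro i
        have : ((Duj j - Du) x) i = Duj j x i - Du x i := rfl
        rw [this]
        exact hcomp i
    refine le_trans hnorm (le_of_eq ?_)
    have hGx : G x = (1 + ‖x‖) ^ (-β) := rfl
    have hM : r₀x ^ (-β) = (4:ℝ) ^ β * G x := by
      rw [hGx, hr₀xdef, Real.div_rpow (by positivity) (by norm_num),
        Real.rpow_neg (by norm_num : (0:ℝ) ≤ 4), div_eq_mul_inv, inv_inv]
      ring
    rw [hM, hCdef]
    ring
  -- eLpNorm of G is finite
  have hGm : AEStronglyMeasurable G volume := by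
    apply Continuous.aestronglyMeasurable
    exact (continuous_const.add continuous_norm).rpow_const
      (fun (x : Euc n) => Or.inl (ne_of_gt (by positivity : (0:ℝ) < 1 + ‖x‖)))
  have hGint : Integrable (fun x : Euc n => (1 + ‖x‖) ^ (-(β * r))) volume := by
    apply integrable_one_add_norm (E := Euc n)
    rw [finrank_euclideanSpace_fin]
    have hn0 : (0:ℝ) ≤ (n:ℝ) := Nat.cast_nonneg n
    rw [hβdef]
    nlinarith
  have heG : eLpNorm G R' volume < ∞ := by
    rw [eLpNorm_eq_lintegral_rpow_enorm_toReal hR'0 hR'top, hR'toReal]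
    apply ENNReal.rpow_lt_top_of_nonneg (by positivity)
    have hcongr : ∀ x : Euc n, (‖G x‖₊ : ℝ≥0∞) ^ r
        = ENNReal.ofReal ((1 + ‖x‖) ^ (-(β * r))) := by
      intro x
      rw [show ((‖G x‖₊ : ℝ≥0∞)) = ENNReal.ofReal ‖G x‖ from (ofReal_norm_eq_enorm _).symm, Real.norm_of_nonneg (hG0 x),
        ENNReal.ofReal_rpow_of_nonneg (hG0 x) hr0.le]
      congr 1
      have hGx : G x = (1 + ‖x‖) ^ (-β) := rfl
      rw [hGx, ← Real.rpow_mul (by positivity), neg_mul]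
    have hfin : (∫⁻ x, (‖G x‖₊ : ℝ≥0∞) ^ r ∂volume) < ∞ := by
      calc (∫⁻ x, (‖G x‖₊ : ℝ≥0∞) ^ r ∂volume)
          = ∫⁻ x, ENNReal.ofReal ((1 + ‖x‖) ^ (-(β * r))) ∂volume :=
            lintegral_congr fun x => hcongr x
        _ < ∞ := hGint.lintegral_lt_top
    exact hfin.ne
  have hfm : ∀ j, AEStronglyMeasurable (Duj j - Du) volume :=
    fun j => ((hDujp j).sub hDup).aestronglyMeasurable
  -- tail eLpNorm bound
  set eG := eLpNorm G R' volume with heGdef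
  have htailN : ∀ j, eLpNorm (Duj j - Du) R' (volume.restrict T)
      ≤ ENNReal.ofReal (C * Ij j) * eG := by
    intro j
    have h1 : eLpNorm (Duj j - Du) R' (volume.restrict T)
        ≤ eLpNorm ((C * Ij j) • G) R' (volume.restrict T) := by
      apply eLpNorm_mono_ae
      filter_upwards [htail j] with x hx
      have : ((C * Ij j) • G) x = (C * Ij j) * G x := rfl
      rw [this, Real.norm_eq_abs,
        abs_of_nonneg (mul_nonneg (mul_nonneg hC0 (hIj0 j)) (hG0 x))]
      exact hx
    refine le_trans h1 ?_
    rw [eLpNorm_const_smul]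
    have h2 : ‖C * Ij j‖ₑ = ENNReal.ofReal (C * Ij j) := by
      rw [← ofReal_norm_eq_enorm, Real.norm_of_nonneg (mul_nonneg hC0 (hIj0 j))]
    rw [h2]
    exact mul_le_mul_right (eLpNorm_mono_measure _ Measure.restrict_le_self) _
  -- ball part
  have hvolB : volume (Tᶜ : Set (Euc n)) < ∞ := by
    have hsub : (Tᶜ : Set (Euc n)) ⊆ Metric.ball (0 : Euc n) R₀ := by
      intro x hx
      have : ¬ R₀ ≤ ‖x‖ := hx
      rw [Metric.mem_ball, dist_zero_right]
      exact not_le.mp this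
    exact lt_of_le_of_lt (measure_mono hsub) measure_ball_lt_top
  set cB := (volume (Tᶜ : Set (Euc n))) ^ (1 / r - 1 / p) with hcBdef
  have hcBtop : cB ≠ ∞ := by
    apply (ENNReal.rpow_lt_top_of_nonneg ?_ hvolB.ne).ne
    have h1p : 1 / p ≤ 1 / r := one_div_le_one_div_of_le hr0 hrp
    linarith
  have hball : ∀ j, eLpNorm (Duj j - Du) R' (volume.restrict Tᶜ) ≤ δ j * cB := by
    intro j
    have h1 := eLpNorm_le_eLpNorm_mul_rpow_measure_univ (μ := volume.restrict Tᶜ)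
      hR'P ((hfm j).restrict)
    rw [Measure.restrict_apply_univ, hR'toReal, hPtoReal] at h1
    refine le_trans h1 ?_
    gcongr
    exact eLpNorm_mono_measure _ Measure.restrict_le_self
  -- split
  have hsplit : ∀ j, eLpNorm (Duj j - Du) R' volume
      ≤ eLpNorm (Duj j - Du) R' (volume.restrict Tᶜ)
        + eLpNorm (Duj j - Du) R' (volume.restrict T) := by
    intro j
    have hdecomp : (Duj j - Du)
        = (Tᶜ).indicator (Duj j - Du) + T.indicator (Duj j - Du) := by
      funext x
      by_cases hx : x ∈ T
      · rw [Pi.add_apply, Set.indicator_of_mem hx,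
          Set.indicator_of_notMem (by simpa using hx), zero_add]
      · rw [Pi.add_apply, Set.indicator_of_notMem hx,
          Set.indicator_of_mem (by simpa using hx), add_zero]
    calc eLpNorm (Duj j - Du) R' volume
        = eLpNorm ((Tᶜ).indicator (Duj j - Du) + T.indicator (Duj j - Du)) R' volume := by
          rw [← hdecomp]
      _ ≤ eLpNorm ((Tᶜ).indicator (Duj j - Du)) R' volume
          + eLpNorm (T.indicator (Duj j - Du)) R' volume :=
          eLpNorm_add_le ((hfm j).indicator hTm.compl) ((hfm j).indicator hTm) hR'1
      _ = _ := by
          rw [eLpNorm_indicator_eq_eLpNorm_restrict hTm.compl,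
            eLpNorm_indicator_eq_eLpNorm_restrict hTm]
  -- Ij vs ε
  set cK := (volume K) ^ (1 - 1 / p) with hcKdef
  have hcKtop : cK ≠ ∞ := by
    apply (ENNReal.rpow_lt_top_of_nonneg ?_ hKfin.ne).ne
    have : 1 / p ≤ 1 := by
      rw [div_le_one hp0]; linarith
    linarith
  have hIjle : ∀ j, ENNReal.ofReal (Ij j) ≤ ε j * cK := by
    intro j
    have h1 : ENNReal.ofReal (Ij j) = ∫⁻ y in K, (‖(uj j - u) y‖₊ : ℝ≥0∞) ∂volume :=
      by rw [ofReal_integral_norm_eq_lintegral_enorm (hIint j)]; rfl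
    have h2 := eLpNorm_le_eLpNorm_mul_rpow_measure_univ
      (μ := volume.restrict K) (f := uj j - u) hP1 (((huj j).sub hu).aestronglyMeasurable.restrict)
    rw [Measure.restrict_apply_univ] at h2
    calc ENNReal.ofReal (Ij j)
        = eLpNorm (uj j - u) 1 (volume.restrict K) := by
          rw [h1, eLpNorm_one_eq_lintegral_enorm]; rfl
      _ ≤ eLpNorm (uj j - u) P (volume.restrict K)
          * (volume K) ^ (1 / (1:ℝ≥0∞).toReal - 1 / P.toReal) := h2
      _ ≤ ε j * cK := by
          rw [ENNReal.toReal_one, hPtoReal, hcKdef,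
            show (1:ℝ) / 1 - 1 / p = 1 - 1 / p by norm_num]
          exact mul_le_mul_left (eLpNorm_mono_measure _ Measure.restrict_le_self) _
  -- final bound
  set C₂ := ENNReal.ofReal C * cK * eG with hC₂def
  have hC₂top : C₂ ≠ ∞ :=
    ENNReal.mul_ne_top (ENNReal.mul_ne_top ENNReal.ofReal_ne_top hcKtop) heG.ne
  have hfinal : ∀ j, eLpNorm (Duj j - Du) R' volume ≤ δ j * cB + ε j * C₂ := by
    intro j
    refine le_trans (hsplit j) (add_le_add (hball j) ?_)
    refine le_trans (htailN j) ?_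
    calc ENNReal.ofReal (C * Ij j) * eG
        = ENNReal.ofReal C * ENNReal.ofReal (Ij j) * eG := by
          rw [ENNReal.ofReal_mul hC0]
      _ ≤ ENNReal.ofReal C * (ε j * cK) * eG := by
          gcongr
          exact hIjle j
      _ = ε j * C₂ := by rw [hC₂def]; ring
  have hRHS : Tendsto (fun j => δ j * cB + ε j * C₂) atTop (𝓝 0) := by
    have h1 : Tendsto (fun j => δ j * cB) atTop (𝓝 (0 * cB)) :=
      ENNReal.Tendsto.mul_const hδ (Or.inr hcBtop)
    have h2 : Tendsto (fun j => ε j * C₂) atTop (𝓝 (0 * C₂)) :=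
      ENNReal.Tendsto.mul_const hε (Or.inr hC₂top)
    have := h1.add h2
    simpa using this
  exact tendsto_of_tendsto_of_tendsto_of_le_of_le tendsto_const_nhds hRHS
    (fun j => zero_le) hfinal
end
end

section
/- Let 0<s<1, let 1≤k≤n, let indices 1≤j_1<⋯<j_k≤n be given, and let N: ℝ^n → ℝ^k be the corresponding subvector map. Then there exists a continuous function G: [0,∞)×(ℝ^n)^{k-1} → ℝ such that for all a_1,…,a_k ∈ ℝ^n and all ε_1,…,ε_k > 0, the function x ↦ det(N(x-a_1),…,N(x-a_k)) / (|x-a_1|^{n+s+1}⋯|x-a_k|^{n+s+1}) is Lebesgue integrable on (⋃_{j=1}^k B(a_j,ε_j))^c and |∫_{(⋃_{j=1}^k B(a_j,ε_j))^c} det(N(x-a_1),…,N(x-a_k)) / (|x-a_1|^{n+s+1}⋯|x-a_k|^{n+s+1}) dx| ≤ (ε_1^{1-s}/(ε_2⋯ε_k)^{n+s+2})·G(ε_1, a_2-a_1, …, a_k-a_1). -/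
open MeasureTheory Filter Topology
open scoped ENNReal RealInnerProductSpace
set_option maxHeartbeats 1000000

noncomputable section

/-- determinant of the `k×k` matrix whose columns are the subvectors
`N(x-a_1), …, N(x-a_k)` (rows selected by `jj`). -/
def subDet (n k : ℕ) (jj : Fin k → Fin n) (a : Fin k → Euc n) (x : Euc n) : ℝ :=
  Matrix.det (Matrix.of fun (l i : Fin k) => (x - a i) (jj l))

namespace Stmt11Aux

/-- fixed part of the column-reduced matrix -/
def Cmat {n k : ℕ} (jj : Fin k → Fin n) (a : Fin k → Euc n) (i₀ : Fin k) :
    Matrix (Fin k) (Fin k) ℝ := Matrix.of fun l i => (a i₀ - a i) (jj l)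

/-- determinant as a linear functional of the `i₀` column -/
def Lmap {n k : ℕ} (jj : Fin k → Fin n) (a : Fin k → Euc n) (i₀ : Fin k) :
    Euc n →ₗ[ℝ] ℝ where
  toFun y := ((Cmat jj a i₀).updateCol i₀ fun l => y (jj l)).det
  map_add' y z := by
    dsimp only
    have h : (fun l => (y + z) (jj l)) = (fun l => y (jj l)) + fun l => z (jj l) := rfl
    rw [h, Matrix.det_updateCol_add]
  map_smul' c y := by
    dsimp only
    have h : (fun l => (c • y) (jj l)) = c • fun l => y (jj l) := rfl
    rw [h, Matrix.det_updateCol_smul]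
    simp

/-- the unipotent column-operation matrix -/
def Umat {k : ℕ} (i₀ : Fin k) : Matrix (Fin k) (Fin k) ℝ :=
  Matrix.of fun p q => if p = q then 1 else if p = i₀ then 1 else 0

lemma Umat_det {k : ℕ} (i₀ : Fin k) (hi₀ : (i₀ : ℕ) = 0) : (Umat i₀).det = 1 := by
  rw [Matrix.det_of_upperTriangular]
  · simp [Umat]
  · intro p q hpq
    have hpq' : (q : ℕ) < (p : ℕ) := hpq
    simp only [Umat, Matrix.of_apply]
    have h1 : p ≠ q := by intro h; subst h; exact lt_irrefl _ hpq'
    have h2 : p ≠ i₀ := by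
      intro h
      subst h
      omega
    simp [h1, h2]

lemma subDet_eq {n k : ℕ} (jj : Fin k → Fin n) (a : Fin k → Euc n) (i₀ : Fin k)
    (hi₀ : (i₀ : ℕ) = 0) (x : Euc n) :
    subDet n k jj a x = Lmap jj a i₀ (x - a i₀) := by
  have hM : (Matrix.of fun (l i : Fin k) => (x - a i) (jj l)) =
      ((Cmat jj a i₀).updateCol i₀ fun l => (x - a i₀) (jj l)) * Umat i₀ := by
    ext l q
    rw [Matrix.mul_apply]
    by_cases hq : q = i₀
    · subst hq
      have h : ∀ p, ((Cmat jj a q).updateCol q fun l => (x - a q) (jj l)) l p *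
          Umat q p q = if p = q then (x - a q) (jj l) else 0 := by
        intro p
        by_cases hp : p = q
        · subst hp; simp [Umat, Matrix.updateCol_self]
        · simp [Umat, hp]
      rw [Finset.sum_congr rfl fun p _ => h p, Finset.sum_ite_eq' Finset.univ q]
      simp
    · have h : ∀ p, ((Cmat jj a i₀).updateCol i₀ fun l => (x - a i₀) (jj l)) l p *
          Umat i₀ p q =
            (if p = q then (a i₀ - a q) (jj l) else 0) +
              if p = i₀ then (x - a i₀) (jj l) else 0 := by
        intro p
        by_cases h1 : p = q
        · subst h1
          have h2 : p ≠ i₀ := hq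
          simp [Umat, h2, Matrix.updateCol_ne h2, Cmat]
        · by_cases h2 : p = i₀
          · subst h2; simp [Umat, h1, Matrix.updateCol_self]
          · simp [Umat, h1, h2, Matrix.updateCol_ne h2]
      rw [Finset.sum_congr rfl fun p _ => h p, Finset.sum_add_distrib,
        Finset.sum_ite_eq' Finset.univ q, Finset.sum_ite_eq' Finset.univ i₀]
      simp only [Finset.mem_univ, if_true, Matrix.of_apply]
      show (x - a q) (jj l) = (a i₀ - a q) (jj l) + (x - a i₀) (jj l)
      show x (jj l) - a q (jj l) = (a i₀) (jj l) - a q (jj l) + (x (jj l) - a i₀ (jj l))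
      ring
  rw [subDet, hM, Matrix.det_mul, Umat_det i₀ hi₀, mul_one]
  rfl

lemma Lmap_apply_sub {n k : ℕ} (jj : Fin k → Fin n) (a : Fin k → Euc n) (i₀ : Fin k)
    (i : Fin k) : Lmap jj a i₀ (a i - a i₀) = 0 := by
  by_cases hi : i = i₀
  · subst hi
    rw [sub_self, map_zero]
  · have h1 : a i - a i₀ = -(a i₀ - a i) := by abel
    rw [h1, map_neg, neg_eq_zero]
    show ((Cmat jj a i₀).updateCol i₀ fun l => (a i₀ - a i) (jj l)).det = 0
    apply Matrix.det_zero_of_column_eq (show i₀ ≠ i from fun h => hi h.symm)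
    intro l
    rw [Matrix.updateCol_self, Matrix.updateCol_ne (show i ≠ i₀ from hi)]
    rfl

/-- key: the function is integrable on the complement of the balls and its integral vanishes. -/
theorem key {n k : ℕ} (hk : 0 < k) (s : ℝ) (hs0 : 0 < s)
    (jj : Fin k → Fin n) (a : Fin k → Euc n) (ε : Fin k → ℝ) (hε : ∀ i, 0 < ε i) :
    IntegrableOn (fun x : Euc n => subDet n k jj a x / ∏ i, ‖x - a i‖ ^ ((n : ℝ) + s + 1))
      (⋃ i, Metric.ball (a i) (ε i))ᶜ (volume : Measure (Euc n)) ∧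
    ∫ x in (⋃ i, Metric.ball (a i) (ε i))ᶜ,
      subDet n k jj a x / ∏ i, ‖x - a i‖ ^ ((n : ℝ) + s + 1) = 0 := by
  set i₀ : Fin k := ⟨0, hk⟩ with hi₀def
  have hi₀ : (i₀ : ℕ) = 0 := rfl
  set p : ℝ := (n : ℝ) + s + 1 with hpdef
  have hp : 0 < p := by positivity
  obtain ⟨w, hw⟩ : ∃ w : Euc n, ∀ y : Euc n, ⟪w, y⟫ = Lmap jj a i₀ y :=
    ⟨(InnerProductSpace.toDual ℝ (Euc n)).symm (LinearMap.toContinuousLinearMap (Lmap jj a i₀)),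
      fun y => InnerProductSpace.toDual_symm_apply⟩
  have hsub : ∀ x : Euc n, subDet n k jj a x = ⟪w, x - a i₀⟫ := fun x => by
    rw [hw, subDet_eq jj a i₀ hi₀ x]
  have hworth : ∀ i, ⟪w, a i - a i₀⟫ = 0 := fun i => by
    rw [hw]; exact Lmap_apply_sub jj a i₀ i
  set D : Set (Euc n) := (⋃ i, Metric.ball (a i) (ε i))ᶜ with hDdef
  have hDmeas : MeasurableSet D :=
    (isOpen_iUnion fun i => Metric.isOpen_ball).isClosed_compl.measurableSet
  have hmemD : ∀ x ∈ D, ∀ i, ε i ≤ ‖x - a i‖ := by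
    intro x hx i
    simp only [hDdef, Set.mem_compl_iff, Set.mem_iUnion, Metric.mem_ball, not_exists,
      not_lt] at hx
    simpa [dist_eq_norm] using hx i
  set f : Euc n → ℝ := fun x => subDet n k jj a x / ∏ i, ‖x - a i‖ ^ p with hfdef
  -- measurability
  have hnum_cont : Continuous (subDet n k jj a) := by
    apply Continuous.matrix_det
    apply continuous_matrix
    intro l i
    exact (EuclideanSpace.proj (jj l)).continuous.comp (continuous_sub_right (a i))
  have hden_cont : Continuous fun x : Euc n => ∏ i, ‖x - a i‖ ^ p := by
    apply continuous_finset_prod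
    intro i _
    exact ((continuous_sub_right (a i)).norm).rpow_const fun x => Or.inr hp.le
  have hfmeas : AEStronglyMeasurable f (volume.restrict D) :=
    (hnum_cont.measurable.div hden_cont.measurable).aestronglyMeasurable
  -- integrable majorant
  set E : ℝ := ∏ i ∈ Finset.univ.erase i₀, ε i ^ p with hEdef
  have hEpos : (0:ℝ) < E :=
    Finset.prod_pos fun i _ => Real.rpow_pos_of_pos (hε i) p
  set K : ℝ := (1 + (ε i₀)⁻¹) ^ ((n : ℝ) + s) with hKdef
  have hKpos : 0 < K := Real.rpow_pos_of_pos (by have := hε i₀; positivity) _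
  have hint_g : Integrable
      (fun x : Euc n => ‖w‖ / E * K * (1 + ‖x - a i₀‖) ^ (-((n : ℝ) + s))) := by
    have h0 : Integrable (fun y : Euc n => (1 + ‖y‖) ^ (-((n : ℝ) + s))) := by
      apply integrable_one_add_norm
      simp
      linarith
    have h1 := ((measurePreserving_sub_right (volume : Measure (Euc n)) (a i₀)).integrable_comp
      h0.aestronglyMeasurable).2 h0
    exact ((by simpa [Function.comp_def] using h1 : Integrable fun x : Euc n =>
      (1 + ‖x - a i₀‖) ^ (-((n : ℝ) + s)))).const_mul _
  have hbound : ∀ x ∈ D, ‖f x‖ ≤ ‖w‖ / E * K * (1 + ‖x - a i₀‖) ^ (-((n : ℝ) + s)) := by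
    intro x hx
    have hy : ε i₀ ≤ ‖x - a i₀‖ := hmemD x hx i₀
    have hy0 : 0 < ‖x - a i₀‖ := lt_of_lt_of_le (hε i₀) hy
    have hnum : |subDet n k jj a x| ≤ ‖w‖ * ‖x - a i₀‖ := by
      rw [hsub x]
      exact abs_real_inner_le_norm w _
    have hsplit : (∏ i, ‖x - a i‖ ^ p) =
        ‖x - a i₀‖ ^ p * ∏ i ∈ Finset.univ.erase i₀, ‖x - a i‖ ^ p :=
      (Finset.mul_prod_erase Finset.univ _ (Finset.mem_univ i₀)).symm
    have hE' : E ≤ ∏ i ∈ Finset.univ.erase i₀, ‖x - a i‖ ^ p :=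
      Finset.prod_le_prod (fun i _ => (Real.rpow_pos_of_pos (hε i) p).le)
        (fun i _ => Real.rpow_le_rpow (hε i).le (hmemD x hx i) hp.le)
    have hden_lb : ‖x - a i₀‖ ^ p * E ≤ ∏ i, ‖x - a i‖ ^ p := by
      rw [hsplit]
      exact mul_le_mul_of_nonneg_left hE' (Real.rpow_pos_of_pos hy0 p).le
    have hden_pos : (0:ℝ) < ‖x - a i₀‖ ^ p * E := by positivity
    have h1 : ‖f x‖ ≤ (‖w‖ * ‖x - a i₀‖) / (‖x - a i₀‖ ^ p * E) := by
      rw [hfdef]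
      dsimp only
      rw [Real.norm_eq_abs, abs_div,
        abs_of_pos (lt_of_lt_of_le hden_pos hden_lb)]
      exact div_le_div₀ (by positivity) hnum hden_pos hden_lb
    have hps : ‖x - a i₀‖ ^ p = ‖x - a i₀‖ ^ ((n : ℝ) + s) * ‖x - a i₀‖ := by
      rw [hpdef, Real.rpow_add hy0, Real.rpow_one]
    have h2 : (‖w‖ * ‖x - a i₀‖) / (‖x - a i₀‖ ^ p * E) =
        ‖w‖ / (E * ‖x - a i₀‖ ^ ((n : ℝ) + s)) := by
      rw [hps]
      field_simp
    have hkey : (1 + ‖x - a i₀‖) ^ ((n : ℝ) + s) ≤ K * ‖x - a i₀‖ ^ ((n : ℝ) + s) := by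
      have h3 : (1:ℝ) ≤ (ε i₀)⁻¹ * ‖x - a i₀‖ := by
        have h4 := mul_le_mul_of_nonneg_left hy (inv_nonneg.2 (hε i₀).le)
        rwa [inv_mul_cancel₀ (hε i₀).ne'] at h4
      have ha : 1 + ‖x - a i₀‖ ≤ (1 + (ε i₀)⁻¹) * ‖x - a i₀‖ := by nlinarith
      calc (1 + ‖x - a i₀‖) ^ ((n : ℝ) + s)
          ≤ ((1 + (ε i₀)⁻¹) * ‖x - a i₀‖) ^ ((n : ℝ) + s) :=
            Real.rpow_le_rpow (by positivity) ha (by positivity)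
        _ = K * ‖x - a i₀‖ ^ ((n : ℝ) + s) :=
            Real.mul_rpow (by have := hε i₀; positivity) (norm_nonneg _)
    have hA : 0 < ‖x - a i₀‖ ^ ((n : ℝ) + s) := Real.rpow_pos_of_pos hy0 _
    have hB : 0 < (1 + ‖x - a i₀‖) ^ ((n : ℝ) + s) :=
      Real.rpow_pos_of_pos (by positivity) _
    have h5 : ‖w‖ / (E * ‖x - a i₀‖ ^ ((n : ℝ) + s)) ≤
        ‖w‖ / E * K * (1 + ‖x - a i₀‖) ^ (-((n : ℝ) + s)) := by
      have hrhs : ‖w‖ / E * K * (1 + ‖x - a i₀‖) ^ (-((n : ℝ) + s)) =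
          ‖w‖ * K / (E * (1 + ‖x - a i₀‖) ^ ((n : ℝ) + s)) := by
        rw [Real.rpow_neg (by positivity : (0:ℝ) ≤ 1 + ‖x - a i₀‖)]
        field_simp
        try ring
      rw [hrhs, div_le_div_iff₀ (by positivity) (by positivity)]
      nlinarith [mul_le_mul_of_nonneg_left hkey (mul_nonneg (norm_nonneg w) hEpos.le)]
    exact le_trans h1 (le_trans (le_of_eq h2) h5)
  have hIntOn : IntegrableOn f D volume := by
    refine Integrable.mono' hint_g.integrableOn hfmeas ?_
    rw [ae_restrict_iff' hDmeas]
    exact ae_of_all _ hbound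
  refine ⟨hIntOn, ?_⟩
  by_cases hw0 : w = 0
  · have hfz : f = fun _ => (0:ℝ) := funext fun x => by
      have hz : subDet n k jj a x = 0 := by rw [hsub x, hw0, inner_zero_left]
      rw [hfdef]
      dsimp only
      rw [hz, zero_div]
    rw [hfz]
    simp
  · set S := Submodule.reflection (ℝ ∙ w)ᗮ with hSdef
    have hSfix : ∀ i, S (a i - a i₀) = a i - a i₀ := fun i =>
      Submodule.reflection_mem_subspace_eq_self
        (Submodule.mem_orthogonal_singleton_iff_inner_right.2 (hworth i))
    have hSneg : ∀ y, ⟪w, S y⟫ = -⟪w, y⟫ := by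
      intro y
      have h1 : S w = -w := Submodule.reflection_orthogonalComplement_singleton_eq_neg w
      have h2 : S (S y) = y := Submodule.reflection_involutive _ y
      calc ⟪w, S y⟫ = ⟪S w, S (S y)⟫ := by rw [LinearIsometryEquiv.inner_map_map]
        _ = -⟪w, y⟫ := by rw [h1, h2, inner_neg_left]
    set T : Euc n → Euc n := fun x => S (x - a i₀) + a i₀ with hTdef
    have hTx : ∀ x i, T x - a i = S (x - a i) := by
      intro x i
      show S (x - a i₀) + a i₀ - a i = S (x - a i)
      rw [show x - a i = (x - a i₀) - (a i - a i₀) from by abel]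
      simp only [map_sub, hSfix i]
      abel
    have hTinv : ∀ x, T (T x) = x := by
      intro x
      show S (S (x - a i₀) + a i₀ - a i₀) + a i₀ = x
      rw [add_sub_cancel_right, Submodule.reflection_involutive _ (x - a i₀), sub_add_cancel]
    have hnormT : ∀ x i, ‖T x - a i‖ = ‖x - a i‖ := fun x i => by
      rw [hTx x i]; exact S.norm_map _
    have hmemT : ∀ x, T x ∈ D ↔ x ∈ D := by
      intro x
      have hd : ∀ i, dist (T x) (a i) = dist x (a i) := fun i => by
        rw [dist_eq_norm, dist_eq_norm, hnormT]
      simp only [hDdef, Set.mem_compl_iff, Set.mem_iUnion, Metric.mem_ball, not_exists, not_lt]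
      exact ⟨fun h i => by rw [← hd i]; exact h i, fun h i => by rw [hd i]; exact h i⟩
    have himg : T '' D = D := by
      ext y
      constructor
      · rintro ⟨x, hx, rfl⟩
        exact (hmemT x).2 hx
      · intro hy
        exact ⟨T y, (hmemT (T y)).1 (by rw [hTinv y]; exact hy), hTinv y⟩
    have hfT : ∀ x, f (T x) = -f x := by
      intro x
      have h1 : subDet n k jj a (T x) = -subDet n k jj a x := by
        rw [hsub, hsub, hTx x i₀, hSneg]
      have h2 : (∏ i, ‖T x - a i‖ ^ p) = ∏ i, ‖x - a i‖ ^ p :=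
        Finset.prod_congr rfl fun i _ => by rw [hnormT]
      rw [hfdef]
      dsimp only
      rw [h1, h2, neg_div]
    have hmp : MeasurePreserving T volume volume := by
      have := (measurePreserving_add_right (volume : Measure (Euc n)) (a i₀)).comp
        (S.measurePreserving.comp (measurePreserving_sub_right (volume : Measure (Euc n)) (a i₀)))
      simpa [Function.comp_def, hTdef] using this
    have hemb : MeasurableEmbedding T :=
      ((Homeomorph.subRight (a i₀)).trans
        ((S.toHomeomorph).trans (Homeomorph.addRight (a i₀)))).measurableEmbedding
    have hI : ∫ x in D, f x = - ∫ x in D, f x := by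
      calc ∫ x in D, f x = ∫ x in T '' D, f x := by rw [himg]
        _ = ∫ x in D, f (T x) := hmp.setIntegral_image_emb hemb f D
        _ = ∫ x in D, -f x := by simp_rw [hfT]
        _ = - ∫ x in D, f x := integral_neg f
    linarith

end Stmt11Aux

/-- key estimate for the fractional Piola identity. -/
theorem stmt11 (n k : ℕ) (hk : 0 < k) (hkn : k ≤ n) (s : ℝ) (hs0 : 0 < s) (hs1 : s < 1)
    (jj : Fin k → Fin n) (hjj : StrictMono jj) :
    ∃ G : ℝ → ({i : Fin k // i ≠ ⟨0, hk⟩} → Euc n) → ℝ,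
      Continuous (fun q : ℝ × ({i : Fin k // i ≠ ⟨0, hk⟩} → Euc n) => G q.1 q.2) ∧
      ∀ (a : Fin k → Euc n) (ε : Fin k → ℝ), (∀ i, 0 < ε i) →
        IntegrableOn
          (fun x : Euc n => subDet n k jj a x / ∏ i, ‖x - a i‖ ^ ((n : ℝ) + s + 1))
          (⋃ i, Metric.ball (a i) (ε i))ᶜ (volume : Measure (Euc n)) ∧
        |∫ x in (⋃ i, Metric.ball (a i) (ε i))ᶜ,
            subDet n k jj a x / ∏ i, ‖x - a i‖ ^ ((n : ℝ) + s + 1)| ≤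
          (ε ⟨0, hk⟩ ^ (1 - s) /
            (∏ i ∈ Finset.univ.filter (fun i : Fin k => i ≠ ⟨0, hk⟩), ε i) ^ ((n : ℝ) + s + 2)) *
            G (ε ⟨0, hk⟩) (fun i => a i.1 - a ⟨0, hk⟩) := by
  refine ⟨fun _ _ => 0, continuous_const, ?_⟩
  intro a ε hε
  obtain ⟨h1, h2⟩ := Stmt11Aux.key hk s hs0 jj a ε hε
  refine ⟨h1, ?_⟩
  rw [h2]
  simp

end
end
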